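/- arXiv:1104.1338 — 2 statements merged into one kernel-verified Lean document; each statement's English description precedes it below -/
import Mathlib

section
/- For any complex n×n matrix A, any 1 ≤ k ≤ n, and any n×(n−k+1) isometry M, every element λ of Λ_k(A) satisfies |λ| ≤ r(M*AM), where r denotes the numerical radius of M*AM; consequently sup{|λ| : λ ∈ Λ_k(A)} ≤ inf over isometries M of r(M*AM). -/
open Matrix

noncomputable section

/-- The classical numerical range F(B) = {x* B x : x* x = 1}. -/
def numRange {m : ℕ} (B : Matrix (Fin m) (Fin m) ℂ) : Set ℂ :=
  {z | ∃ x : Fin m → ℂ, star x ⬝ᵥ x = 1 ∧ z = star x ⬝ᵥ B.mulVec x}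

/-- The rank-k numerical range Λ_k(A). -/
def rankNumRange {n : ℕ} (A : Matrix (Fin n) (Fin n) ℂ) (k : ℕ) : Set ℂ :=
  {l | ∃ X : Matrix (Fin n) (Fin k) ℂ, Xᴴ * X = 1 ∧ Xᴴ * A * X = l • 1}

/-- The numerical radius r(B) = sup { |z| : z ∈ F(B) }. -/
def numRadius {m : ℕ} (B : Matrix (Fin m) (Fin m) ℂ) : ℝ :=
  sSup ((fun z : ℂ => ‖z‖) '' numRange B)

/- ### Auxiliary lemmas -/

lemma aux_unit_abs_le {m : ℕ} (x : Fin m → ℂ) (hx : star x ⬝ᵥ x = 1) (i : Fin m) :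
    ‖x i‖ ≤ 1 := by
  have h : (∑ j, Complex.normSq (x j) : ℝ) = 1 := by
    have : star x ⬝ᵥ x = ((∑ j, Complex.normSq (x j) : ℝ) : ℂ) := by
      simp [dotProduct, Complex.normSq_eq_conj_mul_self]
    rw [this] at hx
    exact_mod_cast hx
  have h1 : Complex.normSq (x i) ≤ 1 := by
    rw [← h]
    exact Finset.single_le_sum (f := fun j => Complex.normSq (x j))
      (fun j _ => Complex.normSq_nonneg _) (Finset.mem_univ i)
  have := Complex.sq_norm (x i)
  nlinarith [norm_nonneg (x i)]

lemma aux_numRange_abs_le {m : ℕ} (B : Matrix (Fin m) (Fin m) ℂ) (z : ℂ)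
    (hz : ∃ x : Fin m → ℂ, star x ⬝ᵥ x = 1 ∧ z = star x ⬝ᵥ B.mulVec x) :
    ‖z‖ ≤ ∑ i, ∑ j, ‖B i j‖ := by
  obtain ⟨x, hx, rfl⟩ := hz
  calc ‖star x ⬝ᵥ B.mulVec x‖
      ≤ ∑ i, ‖star x i * (B.mulVec x) i‖ := by
        exact norm_sum_le _ _
    _ ≤ ∑ i, ∑ j, ‖B i j‖ := by
        apply Finset.sum_le_sum
        intro i _
        rw [norm_mul]
        calc ‖star x i‖ * ‖(B.mulVec x) i‖
            ≤ 1 * ‖(B.mulVec x) i‖ := by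
              apply mul_le_mul_of_nonneg_right _ (norm_nonneg _)
              simpa [Pi.star_apply] using aux_unit_abs_le x hx i
          _ = ‖∑ j, B i j * x j‖ := by simp [mulVec, dotProduct]
          _ ≤ ∑ j, ‖B i j * x j‖ := norm_sum_le _ _
          _ ≤ ∑ j, ‖B i j‖ := by
              apply Finset.sum_le_sum
              intro j _
              rw [norm_mul]
              nlinarith [aux_unit_abs_le x hx j, norm_nonneg (B i j),
                norm_nonneg (x j)]

lemma aux_dot_conj {n m : ℕ} (X : Matrix (Fin n) (Fin m) ℂ) (B : Matrix (Fin n) (Fin n) ℂ)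
    (u : Fin m → ℂ) :
    star (X.mulVec u) ⬝ᵥ B.mulVec (X.mulVec u) = star u ⬝ᵥ ((Xᴴ * B * X).mulVec u) := by
  rw [star_mulVec, ← dotProduct_mulVec, mulVec_mulVec, mulVec_mulVec, Matrix.mul_assoc]

lemma aux_iso_dot {n m : ℕ} (X : Matrix (Fin n) (Fin m) ℂ) (hX : Xᴴ * X = 1) (u : Fin m → ℂ) :
    star (X.mulVec u) ⬝ᵥ (X.mulVec u) = star u ⬝ᵥ u := by
  have h := aux_dot_conj X 1 u
  rw [Matrix.mul_one, hX] at h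
  simpa using h

lemma aux_finrank_range_iso {n m : ℕ} (X : Matrix (Fin n) (Fin m) ℂ) (h : Xᴴ * X = 1) :
    Module.finrank ℂ (LinearMap.range X.mulVecLin) = m := by
  have hinj : Function.Injective X.mulVecLin := by
    intro u v huv
    have : (Xᴴ * X).mulVec u = (Xᴴ * X).mulVec v := by
      rw [← mulVec_mulVec, ← mulVec_mulVec]
      simp only [mulVecLin_apply] at huv
      rw [huv]
    simpa [h] using this
  rw [LinearMap.finrank_range_of_inj hinj]
  simp

lemma aux_mem_numRange {n k m : ℕ} (hm : n < k + m)
    (A : Matrix (Fin n) (Fin n) ℂ)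
    (M : Matrix (Fin n) (Fin m) ℂ) (hM : Mᴴ * M = 1)
    (l : ℂ) (X : Matrix (Fin n) (Fin k) ℂ) (hX1 : Xᴴ * X = 1) (hX2 : Xᴴ * A * X = l • 1) :
    ∃ v : Fin m → ℂ, star v ⬝ᵥ v = 1 ∧ l = star v ⬝ᵥ (Mᴴ * A * M).mulVec v := by
  obtain ⟨x, hxUV, hx0⟩ :
      ∃ x ∈ LinearMap.range X.mulVecLin ⊓ LinearMap.range M.mulVecLin, x ≠ 0 := by
    have h1 := Submodule.finrank_sup_add_finrank_inf_eq
      (LinearMap.range X.mulVecLin) (LinearMap.range M.mulVecLin)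
    have h2 : Module.finrank ℂ
        ↥(LinearMap.range X.mulVecLin ⊔ LinearMap.range M.mulVecLin) ≤ n := by
      have := Submodule.finrank_le (LinearMap.range X.mulVecLin ⊔ LinearMap.range M.mulVecLin)
      simpa using this
    rw [aux_finrank_range_iso X hX1, aux_finrank_range_iso M hM] at h1
    have h3 : 0 < Module.finrank ℂ
        ↥(LinearMap.range X.mulVecLin ⊓ LinearMap.range M.mulVecLin) := by omega
    rw [Module.finrank_pos_iff] at h3
    obtain ⟨y, hy⟩ := exists_ne (0 : ↥(LinearMap.range X.mulVecLin ⊓ LinearMap.range M.mulVecLin))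
    exact ⟨y, y.2, fun h0 => hy (Subtype.ext h0)⟩
  obtain ⟨⟨u, hu⟩, ⟨v, hv⟩⟩ := hxUV
  simp only [mulVecLin_apply] at hu hv
  set c : ℝ := ∑ i, Complex.normSq (x i) with hc
  have hdotx : star x ⬝ᵥ x = (c : ℂ) := by
    simp [dotProduct, hc, Complex.normSq_eq_conj_mul_self]
  have hcpos : 0 < c := by
    have : ∃ i, x i ≠ 0 := by
      by_contra hcon
      push_neg at hcon
      exact hx0 (funext hcon)
    obtain ⟨i, hi⟩ := this
    exact Finset.sum_pos' (fun j _ => Complex.normSq_nonneg _)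
      ⟨i, Finset.mem_univ i, Complex.normSq_pos.2 hi⟩
  set s : ℝ := (Real.sqrt c)⁻¹ with hs
  have hs2 : (s : ℂ) * (s : ℂ) * (c : ℂ) = 1 := by
    have : s * s * c = 1 := by
      rw [hs, ← mul_inv, Real.mul_self_sqrt hcpos.le, inv_mul_cancel₀ hcpos.ne']
    exact_mod_cast this
  refine ⟨(s : ℂ) • v, ?_, ?_⟩
  · have h1 : star v ⬝ᵥ v = (c : ℂ) := by rw [← hdotx, ← hv, aux_iso_dot M hM]
    simp only [star_smul, smul_dotProduct, dotProduct_smul, smul_eq_mul, h1,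
      Complex.star_def, Complex.conj_ofReal]
    rw [← mul_assoc, hs2]
  · have hu1 : star u ⬝ᵥ u = (c : ℂ) := by rw [← hdotx, ← hu, aux_iso_dot X hX1]
    have key : star v ⬝ᵥ (Mᴴ * A * M).mulVec v = l * (c : ℂ) := by
      rw [← aux_dot_conj M A v, hv, ← hu, aux_dot_conj X A u, hX2]
      simp only [smul_mulVec, Matrix.one_mulVec, dotProduct_smul, smul_eq_mul]
      rw [hu1]
    simp only [star_smul, smul_dotProduct, dotProduct_smul, mulVec_smul, smul_eq_mul,
      Complex.star_def, Complex.conj_ofReal]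
    rw [key]
    linear_combination (-l) * hs2

lemma aux_exists_isometry {n m : ℕ} (hm : m ≤ n) :
    ∃ M : Matrix (Fin n) (Fin m) ℂ, Mᴴ * M = 1 := by
  refine ⟨Matrix.of fun i j => if i = Fin.castLE hm j then 1 else 0, ?_⟩
  ext a b
  simp only [Matrix.mul_apply, conjTranspose_apply, Matrix.of_apply,
    ite_mul, one_mul, zero_mul, mul_ite, mul_one, mul_zero, Matrix.one_apply]
  rw [Finset.sum_ite_eq' Finset.univ (Fin.castLE hm b)
    (fun x => star (if x = Fin.castLE hm a then (1:ℂ) else 0))]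
  simp only [Finset.mem_univ, if_true]
  by_cases h : a = b
  · subst h; simp
  · have : ¬ Fin.castLE hm b = Fin.castLE hm a := by
      intro hc
      exact h (by simpa using (Fin.castLE_injective hm hc).symm)
    simp [h, this]

theorem stmt_7 {n k : ℕ} (hk : 1 ≤ k) (hkn : k ≤ n) (A : Matrix (Fin n) (Fin n) ℂ) :
    (∀ M : Matrix (Fin n) (Fin (n - k + 1)) ℂ, Mᴴ * M = 1 →
       ∀ l ∈ rankNumRange A k, ‖l‖ ≤ numRadius (Mᴴ * A * M)) ∧
    sSup ((fun z : ℂ => ‖z‖) '' rankNumRange A k) ≤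
      ⨅ M : {M : Matrix (Fin n) (Fin (n - k + 1)) ℂ // Mᴴ * M = 1},
        numRadius ((M : Matrix (Fin n) (Fin (n - k + 1)) ℂ)ᴴ * A * (M : Matrix (Fin n) (Fin (n - k + 1)) ℂ)) := by
  have hmn : n - k + 1 ≤ n := by omega
  have hmlt : n < k + (n - k + 1) := by omega
  have bdd : ∀ (m : ℕ) (B : Matrix (Fin m) (Fin m) ℂ), BddAbove ((fun z : ℂ => ‖z‖) '' numRange B) := by
    intro m B
    refine ⟨∑ i, ∑ j, ‖B i j‖, ?_⟩
    rintro r ⟨z, hz, rfl⟩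
    exact aux_numRange_abs_le B z hz
  have part1 : ∀ M : Matrix (Fin n) (Fin (n - k + 1)) ℂ, Mᴴ * M = 1 →
      ∀ l ∈ rankNumRange A k, ‖l‖ ≤ numRadius (Mᴴ * A * M) := by
    intro M hM l hl
    obtain ⟨X, hX1, hX2⟩ := hl
    obtain ⟨v, hv1, hv2⟩ := aux_mem_numRange hmlt A M hM l X hX1 hX2
    exact le_csSup (bdd _ _) ⟨l, ⟨v, hv1, hv2⟩, rfl⟩
  refine ⟨part1, ?_⟩
  have hne : Nonempty {M : Matrix (Fin n) (Fin (n - k + 1)) ℂ // Mᴴ * M = 1} := by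
    obtain ⟨M, hM⟩ := aux_exists_isometry (n := n) hmn
    exact ⟨⟨M, hM⟩⟩
  apply le_ciInf
  intro M
  apply Real.sSup_le
  · rintro r ⟨l, hl, rfl⟩
    exact part1 M.1 M.2 l hl
  · apply Real.sSup_nonneg
    rintro r ⟨z, _, rfl⟩
    exact norm_nonneg z
end
end

section
/- The rank-k numerical radius fails the power inequality: there exists a 4×4 complex matrix A with r_2(A²) > (r_2(A))², where r_2 denotes the rank-2 numerical radius. (In contrast, the classical numerical radius satisfies r(A^m) ≤ r(A)^m.) -/
open Matrix

noncomputable section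

/-- The rank-k numerical radius r_k(A) = sup { |z| : z ∈ Λ_k(A) }. -/
def rankNumRadius {n : ℕ} (A : Matrix (Fin n) (Fin n) ℂ) (k : ℕ) : ℝ :=
  sSup ((fun z : ℂ => ‖z‖) '' rankNumRange A k)

open Complex
open scoped ComplexConjugate

/-- Given an isometric pair of columns compressing `diagonal d` to the scalar `l`,
for every coordinate `j` there is a "unit" vector in the range avoiding coordinate `j`,
on which the quadratic form still evaluates to `l` (up to a positive real factor). -/
lemma aux_exists_u (l : ℂ) (d x y : Fin 4 → ℂ) (j : Fin 4)
    (h1 : ∑ i, conj (x i) * x i = 1)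
    (h2 : ∑ i, conj (y i) * y i = 1)
    (h3 : ∑ i, conj (x i) * y i = 0)
    (h4 : ∑ i, conj (y i) * x i = 0)
    (h5 : ∑ i, conj (x i) * (d i * x i) = l)
    (h6 : ∑ i, conj (y i) * (d i * y i) = l)
    (h7 : ∑ i, conj (x i) * (d i * y i) = 0)
    (h8 : ∑ i, conj (y i) * (d i * x i) = 0) :
    ∃ (u : Fin 4 → ℂ) (t : ℝ), 0 < t ∧ u j = 0 ∧
      (∑ i, conj (u i) * u i) = (t : ℂ) ∧
      (∑ i, conj (u i) * (d i * u i)) = (t : ℂ) * l := by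
  by_cases hc : x j = 0 ∧ y j = 0
  · refine ⟨x, 1, one_pos, hc.1, by simpa using h1, by simpa using h5⟩
  · refine ⟨fun i => y j * x i - x j * y i,
      Complex.normSq (x j) + Complex.normSq (y j), ?_, by ring, ?_, ?_⟩
    · rcases (not_and_or.1 hc) with h | h
      · have h' := Complex.normSq_pos.2 h
        have := Complex.normSq_nonneg (y j); linarith
      · have h' := Complex.normSq_pos.2 h
        have := Complex.normSq_nonneg (x j); linarith
    · simp only [Fin.sum_univ_four] at h1 h2 h3 h4 ⊢
      push_cast
      rw [Complex.normSq_eq_conj_mul_self, Complex.normSq_eq_conj_mul_self]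
      simp only [map_sub, _root_.map_mul]
      linear_combination (conj (y j) * y j) * h1 + (conj (x j) * x j) * h2
        - (conj (y j) * x j) * h3 - (conj (x j) * y j) * h4
    · simp only [Fin.sum_univ_four] at h5 h6 h7 h8 ⊢
      push_cast
      rw [Complex.normSq_eq_conj_mul_self, Complex.normSq_eq_conj_mul_self]
      simp only [map_sub, _root_.map_mul]
      linear_combination (conj (y j) * y j) * h5 + (conj (x j) * x j) * h6
        - (conj (y j) * x j) * h7 - (conj (x j) * y j) * h8

/-- The rank-2 numerical range of `diagonal ![1, -1, i, -i]` is contained in `{0}`. -/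
lemma aux_lam_zero (l : ℂ)
    (hl : l ∈ rankNumRange (Matrix.diagonal ![1, -1, Complex.I, -Complex.I]) 2) :
    l = 0 := by
  set d : Fin 4 → ℂ := ![1, -1, Complex.I, -Complex.I] with hd
  obtain ⟨X, hX1, hX2⟩ := hl
  have E1 := fun i j => Matrix.ext_iff.mpr hX1 i j
  have hX2' : Xᴴ * (Matrix.diagonal d * X) = l • 1 := by rw [← Matrix.mul_assoc]; exact hX2
  have E2 := fun i j => Matrix.ext_iff.mpr hX2' i j
  have h1 : ∑ i, conj (X i 0) * X i 0 = 1 := by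
    have := E1 0 0
    simpa [Matrix.mul_apply, Matrix.conjTranspose_apply, Matrix.one_apply] using this
  have h2 : ∑ i, conj (X i 1) * X i 1 = 1 := by
    have := E1 1 1
    simpa [Matrix.mul_apply, Matrix.conjTranspose_apply, Matrix.one_apply] using this
  have h3 : ∑ i, conj (X i 0) * X i 1 = 0 := by
    have := E1 0 1
    simpa [Matrix.mul_apply, Matrix.conjTranspose_apply, Matrix.one_apply] using this
  have h4 : ∑ i, conj (X i 1) * X i 0 = 0 := by
    have := E1 1 0
    simpa [Matrix.mul_apply, Matrix.conjTranspose_apply, Matrix.one_apply] using this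
  have h5 : ∑ i, conj (X i 0) * (d i * X i 0) = l := by
    have := E2 0 0
    simpa [Matrix.mul_apply, Matrix.conjTranspose_apply, Matrix.diagonal_apply, ite_mul,
      zero_mul, Finset.sum_ite_eq, Matrix.one_apply, Matrix.smul_apply] using this
  have h6 : ∑ i, conj (X i 1) * (d i * X i 1) = l := by
    have := E2 1 1
    simpa [Matrix.mul_apply, Matrix.conjTranspose_apply, Matrix.diagonal_apply, ite_mul,
      zero_mul, Finset.sum_ite_eq, Matrix.one_apply, Matrix.smul_apply] using this
  have h7 : ∑ i, conj (X i 0) * (d i * X i 1) = 0 := by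
    have := E2 0 1
    simpa [Matrix.mul_apply, Matrix.conjTranspose_apply, Matrix.diagonal_apply, ite_mul,
      zero_mul, Finset.sum_ite_eq, Matrix.one_apply, Matrix.smul_apply] using this
  have h8 : ∑ i, conj (X i 1) * (d i * X i 0) = 0 := by
    have := E2 1 0
    simpa [Matrix.mul_apply, Matrix.conjTranspose_apply, Matrix.diagonal_apply, ite_mul,
      zero_mul, Finset.sum_ite_eq, Matrix.one_apply, Matrix.smul_apply] using this
  have key := fun j => aux_exists_u l d (fun i => X i 0) (fun i => X i 1) j
    h1 h2 h3 h4 h5 h6 h7 h8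
  -- j = 3 : Im l ≥ 0
  have him1 : 0 ≤ l.im := by
    obtain ⟨u, t, ht, hu, _, e⟩ := key 3
    have e' : (normSq (u 0) : ℂ) - normSq (u 1) + Complex.I * normSq (u 2) = (t:ℂ) * l := by
      rw [Complex.normSq_eq_conj_mul_self, Complex.normSq_eq_conj_mul_self,
        Complex.normSq_eq_conj_mul_self]
      simp only [Fin.sum_univ_four, hu, hd, Matrix.cons_val_zero, Matrix.cons_val_one,
        Matrix.head_cons, Matrix.cons_val_two, Matrix.tail_cons, Matrix.cons_val_three,
        mul_zero, map_zero, zero_mul, add_zero] at e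
      linear_combination e
    have him : t * l.im = normSq (u 2) := by
      have := congrArg Complex.im e'
      simpa using this.symm
    nlinarith [Complex.normSq_nonneg (u 2)]
  -- j = 2 : Im l ≤ 0
  have him2 : l.im ≤ 0 := by
    obtain ⟨u, t, ht, hu, _, e⟩ := key 2
    have e' : (normSq (u 0) : ℂ) - normSq (u 1) - Complex.I * normSq (u 3) = (t:ℂ) * l := by
      rw [Complex.normSq_eq_conj_mul_self, Complex.normSq_eq_conj_mul_self,
        Complex.normSq_eq_conj_mul_self]
      simp only [Fin.sum_univ_four, hu, hd, Matrix.cons_val_zero, Matrix.cons_val_one,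
        Matrix.head_cons, Matrix.cons_val_two, Matrix.tail_cons, Matrix.cons_val_three,
        mul_zero, map_zero, zero_mul, add_zero] at e
      linear_combination e
    have him : t * l.im = -normSq (u 3) := by
      have := congrArg Complex.im e'
      simpa using this.symm
    nlinarith [Complex.normSq_nonneg (u 3)]
  -- j = 1 : Re l ≥ 0
  have hre1 : 0 ≤ l.re := by
    obtain ⟨u, t, ht, hu, _, e⟩ := key 1
    have e' : (normSq (u 0) : ℂ) + Complex.I * normSq (u 2) - Complex.I * normSq (u 3)
        = (t:ℂ) * l := by
      rw [Complex.normSq_eq_conj_mul_self, Complex.normSq_eq_conj_mul_self,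
        Complex.normSq_eq_conj_mul_self]
      simp only [Fin.sum_univ_four, hu, hd, Matrix.cons_val_zero, Matrix.cons_val_one,
        Matrix.head_cons, Matrix.cons_val_two, Matrix.tail_cons, Matrix.cons_val_three,
        mul_zero, map_zero, zero_mul, add_zero] at e
      linear_combination e
    have hre : t * l.re = normSq (u 0) := by
      have := congrArg Complex.re e'
      simpa using this.symm
    nlinarith [Complex.normSq_nonneg (u 0)]
  -- j = 0 : Re l ≤ 0
  have hre2 : l.re ≤ 0 := by
    obtain ⟨u, t, ht, hu, _, e⟩ := key 0
    have e' : -(normSq (u 1) : ℂ) + Complex.I * normSq (u 2) - Complex.I * normSq (u 3)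
        = (t:ℂ) * l := by
      rw [Complex.normSq_eq_conj_mul_self, Complex.normSq_eq_conj_mul_self,
        Complex.normSq_eq_conj_mul_self]
      simp only [Fin.sum_univ_four, hu, hd, Matrix.cons_val_zero, Matrix.cons_val_one,
        Matrix.head_cons, Matrix.cons_val_two, Matrix.tail_cons, Matrix.cons_val_three,
        mul_zero, map_zero, zero_mul, add_zero] at e
      linear_combination e
    have hre : t * l.re = -normSq (u 1) := by
      have := congrArg Complex.re e'
      simpa using this.symm
    nlinarith [Complex.normSq_nonneg (u 1)]
  have h0 : l.re = 0 := le_antisymm hre2 hre1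
  have h0' : l.im = 0 := le_antisymm him2 him1
  exact Complex.ext h0 h0'

theorem stmt_12 :
    ∃ A : Matrix (Fin 4) (Fin 4) ℂ,
      rankNumRadius (A * A) 2 > (rankNumRadius A 2) ^ 2 := by
  refine ⟨Matrix.diagonal ![1, -1, Complex.I, -Complex.I], ?_⟩
  set A : Matrix (Fin 4) (Fin 4) ℂ := Matrix.diagonal ![1, -1, Complex.I, -Complex.I] with hA
  have hAA : A * A = Matrix.diagonal ![1, 1, -1, -1] := by
    rw [hA, Matrix.diagonal_mul_diagonal]
    ext i j
    fin_cases i <;> fin_cases j <;>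
      simp [Matrix.diagonal_apply, Complex.I_mul_I]
  -- rankNumRadius A 2 = 0
  have hr0 : rankNumRadius A 2 = 0 := by
    unfold rankNumRadius
    apply le_antisymm
    · apply Real.sSup_le _ le_rfl
      rintro z ⟨l, hl, rfl⟩
      rw [aux_lam_zero l hl]
      simp
    · apply Real.sSup_nonneg
      rintro z ⟨l, _, rfl⟩
      exact norm_nonneg l
  -- -1 ∈ Λ₂(A²)
  have hmem : (-1 : ℂ) ∈ rankNumRange (A * A) 2 := by
    rw [hAA]
    refine ⟨!![0,0; 0,0; 1,0; 0,1], ?_, ?_⟩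
    · ext i j
      fin_cases i <;> fin_cases j <;>
        simp [Matrix.mul_apply, Fin.sum_univ_four, Matrix.one_apply]
    · ext i j
      fin_cases i <;> fin_cases j <;>
        simp [Matrix.mul_apply, Fin.sum_univ_four, Matrix.diagonal_apply,
          Matrix.one_apply, Matrix.smul_apply]
  -- every element of Λ₂(A²) has absolute value ≤ 1
  have hub : ∀ z ∈ (fun z : ℂ => ‖z‖) '' rankNumRange (A * A) 2, z ≤ 1 := by
    rintro z ⟨l, hl, rfl⟩
    rw [hAA] at hl
    set d2 : Fin 4 → ℂ := ![1, 1, -1, -1] with hd2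
    obtain ⟨X, hX1, hX2⟩ := hl
    have hX2' : Xᴴ * (Matrix.diagonal d2 * X) = l • 1 := by rw [← Matrix.mul_assoc]; exact hX2
    have h1 : ∑ i, conj (X i 0) * X i 0 = 1 := by
      have := Matrix.ext_iff.mpr hX1 0 0
      simpa [Matrix.mul_apply, Matrix.conjTranspose_apply, Matrix.one_apply] using this
    have h5 : ∑ i, conj (X i 0) * (d2 i * X i 0) = l := by
      have := Matrix.ext_iff.mpr hX2' 0 0
      simpa [Matrix.mul_apply, Matrix.conjTranspose_apply, Matrix.diagonal_apply, ite_mul,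
        zero_mul, Finset.sum_ite_eq, Matrix.one_apply, Matrix.smul_apply] using this
    set n0 := Complex.normSq (X 0 0)
    set n1 := Complex.normSq (X 1 0)
    set n2 := Complex.normSq (X 2 0)
    set n3 := Complex.normSq (X 3 0)
    have e1 : ((n0 + n1 + n2 + n3 : ℝ) : ℂ) = 1 := by
      push_cast
      rw [Complex.normSq_eq_conj_mul_self, Complex.normSq_eq_conj_mul_self,
        Complex.normSq_eq_conj_mul_self, Complex.normSq_eq_conj_mul_self]
      simp only [Fin.sum_univ_four] at h1
      linear_combination h1
    have e2 : ((n0 + n1 - n2 - n3 : ℝ) : ℂ) = l := by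
      push_cast
      rw [Complex.normSq_eq_conj_mul_self, Complex.normSq_eq_conj_mul_self,
        Complex.normSq_eq_conj_mul_self, Complex.normSq_eq_conj_mul_self]
      simp only [Fin.sum_univ_four, hd2, Matrix.cons_val_zero, Matrix.cons_val_one,
        Matrix.head_cons, Matrix.cons_val_two, Matrix.tail_cons, Matrix.cons_val_three] at h5
      linear_combination h5
    have e1' : n0 + n1 + n2 + n3 = 1 := by exact_mod_cast e1
    rw [← e2]
    simp only [Complex.norm_real, Real.norm_eq_abs]
    have hn0 := Complex.normSq_nonneg (X 0 0)
    have hn1 := Complex.normSq_nonneg (X 1 0)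
    have hn2 := Complex.normSq_nonneg (X 2 0)
    have hn3 := Complex.normSq_nonneg (X 3 0)
    rw [abs_le]
    constructor <;> linarith
  have hbdd : BddAbove ((fun z : ℂ => ‖z‖) '' rankNumRange (A * A) 2) := ⟨1, hub⟩
  have hmem1 : (1 : ℝ) ∈ (fun z : ℂ => ‖z‖) '' rankNumRange (A * A) 2 :=
    ⟨-1, hmem, by simp⟩
  have hge : (1 : ℝ) ≤ rankNumRadius (A * A) 2 := le_csSup hbdd hmem1
  rw [hr0]
  norm_num
  linarith

end
end
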